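/- Let (G_n) be an FO-convergent sequence of finite graphs (not necessarily possessing a modeling limit) and let ξ(x) be a first-order formula in one free variable such that ξ(G_n) ≠ ∅ for every n and sup_n |ξ(G_n)| < ∞. Then there exists a sequence of roots (r_n) with r_n ∈ ξ(G_n) such that the rooted sequence (G_n, r_n) is FO-convergent, i.e., ⟨φ,(G_n,r_n)⟩ converges for every formula φ(x_1,…,x_p,y). -/

import Mathlib

set_option maxHeartbeats 1000000

open FirstOrder Language MeasureTheory Filter

/-- The set of solutions of a formula `φ` in `p` free variables in a graph. -/
def solSet {V : Type} (G : SimpleGraph V) {p : ℕ}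
    (φ : Language.graph.Formula (Fin p)) : Set (Fin p → V) :=
  letI := G.structure
  {v | φ.Realize v}

/-- The set of solutions of a rooted formula `φ(x₁,…,x_p,y)` with the root variable `y`
interpreted as `r`. -/
def solSetR {V : Type} (G : SimpleGraph V) {p : ℕ}
    (φ : Language.graph.Formula (Fin (p + 1))) (r : V) : Set (Fin p → V) :=
  letI := G.structure
  {v | φ.Realize (Fin.snoc v r)}

/-- The set of solutions of a one-variable formula. -/
def sol1 {V : Type} (G : SimpleGraph V) (ξ : Language.graph.Formula (Fin 1)) : Set V :=
  letI := G.structure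
  {v : V | ξ.Realize (fun _ => v)}

/-- Stone pairing `⟨φ,G⟩` of a formula and a finite graph. -/
noncomputable def stoneG {V : Type} (fV : Fintype V) (G : SimpleGraph V) {p : ℕ}
    (φ : Language.graph.Formula (Fin p)) : ℝ :=
  (Nat.card (solSet G φ) : ℝ) / (Fintype.card V : ℝ) ^ p

/-- Rooted Stone pairing `⟨φ,(G,r)⟩` of a rooted formula and a finite graph with root `r`. -/
noncomputable def stoneGR {V : Type} (fV : Fintype V) (G : SimpleGraph V) {p : ℕ}
    (φ : Language.graph.Formula (Fin (p + 1))) (r : V) : ℝ :=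
  (Nat.card (solSetR G φ r) : ℝ) / (Fintype.card V : ℝ) ^ p

/-- Stone pairing `⟨φ,L⟩` of a formula and a modeling. -/
noncomputable def stoneL {W : Type} [MeasurableSpace W] (L : SimpleGraph W)
    (ν : Measure W) {p : ℕ} (φ : Language.graph.Formula (Fin p)) : ℝ :=
  ((Measure.pi fun _ : Fin p => ν) (solSet L φ)).toReal

/-- Rooted Stone pairing `⟨φ,(L,r)⟩` of a rooted formula and a modeling with root `r`. -/
noncomputable def stoneLR {W : Type} [MeasurableSpace W] (L : SimpleGraph W)
    (ν : Measure W) {p : ℕ} (φ : Language.graph.Formula (Fin (p + 1))) (r : W) : ℝ :=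
  ((Measure.pi fun _ : Fin p => ν) (solSetR L φ r)).toReal

/-! ### Auxiliary material -/

namespace RootingAux

/-! #### Basic bounds -/

lemma card_solSetR_le {V : Type} (fV : Fintype V) (G : SimpleGraph V) {p : ℕ}
    (φ : Language.graph.Formula (Fin (p + 1))) (r : V) :
    Nat.card (solSetR G φ r) ≤ Fintype.card V ^ p := by
  classical
  have h1 : Nat.card (solSetR G φ r) ≤ Nat.card (Set.univ : Set (Fin p → V)) :=
    Nat.card_mono (Set.toFinite _) (Set.subset_univ _)
  rw [Nat.card_univ, Nat.card_eq_fintype_card] at h1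
  simpa [Fintype.card_fun] using h1

lemma stoneGR_nonneg {V : Type} (fV : Fintype V) (G : SimpleGraph V) {p : ℕ}
    (φ : Language.graph.Formula (Fin (p + 1))) (r : V) :
    0 ≤ stoneGR fV G φ r := by
  unfold stoneGR
  positivity

lemma stoneGR_le_one {V : Type} (fV : Fintype V) [Nonempty V] (G : SimpleGraph V) {p : ℕ}
    (φ : Language.graph.Formula (Fin (p + 1))) (r : V) :
    stoneGR fV G φ r ≤ 1 := by
  unfold stoneGR
  rw [div_le_one (by positivity)]
  exact_mod_cast (by exact_mod_cast card_solSetR_le fV G φ r :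
    (Nat.card (solSetR G φ r) : ℝ) ≤ (Fintype.card V : ℝ) ^ p)

lemma stoneGR_top {V : Type} (fV : Fintype V) (G : SimpleGraph V) (r : V) :
    stoneGR fV G (⊤ : Language.graph.Formula (Fin (0 + 1))) r = 1 := by
  have : solSetR G (⊤ : Language.graph.Formula (Fin (0 + 1))) r = Set.univ := by
    letI := G.structure
    ext v
    simp [solSetR, Formula.realize_top]
  rw [stoneGR, this, Nat.card_univ, Nat.card_eq_fintype_card]
  simp

/-! #### Combining two rooted formulas on disjoint variable blocks  -/

def cmbL (p q : ℕ) : Fin (p + 1) → Fin (p + q + 1) :=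
  Fin.snoc (fun i => Fin.castSucc (Fin.castAdd q i)) (Fin.last _)

def cmbR (p q : ℕ) : Fin (q + 1) → Fin (p + q + 1) :=
  Fin.snoc (fun j => Fin.castSucc (Fin.natAdd p j)) (Fin.last _)

def cmb {p q : ℕ} (φ : Language.graph.Formula (Fin (p + 1)))
    (ψ : Language.graph.Formula (Fin (q + 1))) : Language.graph.Formula (Fin (p + q + 1)) :=
  (φ.relabel (cmbL p q)) ⊓ (ψ.relabel (cmbR p q))

variable {V : Type} (G : SimpleGraph V)

lemma realize_cmb {p q : ℕ} (φ : Language.graph.Formula (Fin (p + 1)))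
    (ψ : Language.graph.Formula (Fin (q + 1))) (r : V) (w : Fin (p + q) → V) :
    letI := G.structure
    ((cmb φ ψ).Realize (Fin.snoc w r) ↔
      (φ.Realize (Fin.snoc (fun i => w (Fin.castAdd q i)) r) ∧
       ψ.Realize (Fin.snoc (fun j => w (Fin.natAdd p j)) r))) := by
  letI := G.structure
  have hL : (Fin.snoc w r : Fin (p+q+1) → V) ∘ cmbL p q
      = Fin.snoc (fun i => w (Fin.castAdd q i)) r := by
    funext i
    refine Fin.lastCases ?_ (fun i => ?_) i <;> simp [cmbL]
  have hR : (Fin.snoc w r : Fin (p+q+1) → V) ∘ cmbR p q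
      = Fin.snoc (fun j => w (Fin.natAdd p j)) r := by
    funext i
    refine Fin.lastCases ?_ (fun i => ?_) i <;> simp [cmbR, Fin.natAdd_castSucc, -Fin.castSucc_natAdd]
  rw [cmb, Formula.realize_inf, Formula.realize_relabel, Formula.realize_relabel, hL, hR]

noncomputable def cmbEquiv {p q : ℕ} (φ : Language.graph.Formula (Fin (p + 1)))
    (ψ : Language.graph.Formula (Fin (q + 1))) (r : V) :
    ↑(solSetR G (cmb φ ψ) r) ≃ ↑(solSetR G φ r) × ↑(solSetR G ψ r) where
  toFun w := ⟨⟨fun i => w.1 (Fin.castAdd q i), ((realize_cmb G φ ψ r w.1).1 w.2).1⟩,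
              ⟨fun j => w.1 (Fin.natAdd p j), ((realize_cmb G φ ψ r w.1).1 w.2).2⟩⟩
  invFun ab := ⟨Fin.append ab.1.1 ab.2.1, by
    refine (realize_cmb G φ ψ r _).2 ⟨?_, ?_⟩
    · have : (fun i => Fin.append ab.1.1 ab.2.1 (Fin.castAdd q i)) = ab.1.1 := by
        funext i; simp [Fin.append_left]
      rw [this]; exact ab.1.2
    · have : (fun j => Fin.append ab.1.1 ab.2.1 (Fin.natAdd p j)) = ab.2.1 := by
        funext j; simp [Fin.append_right]
      rw [this]; exact ab.2.2⟩
  left_inv w := by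
    ext i
    refine Fin.addCases (fun i => ?_) (fun j => ?_) i <;>
      simp [Fin.append_left, Fin.append_right]
  right_inv ab := by
    ext i
    · simp [Fin.append_left]
    · simp [Fin.append_right]

lemma stoneGR_cmb (fV : Fintype V) {p q : ℕ} (φ : Language.graph.Formula (Fin (p + 1)))
    (ψ : Language.graph.Formula (Fin (q + 1))) (r : V) :
    stoneGR fV G (cmb φ ψ) r = stoneGR fV G φ r * stoneGR fV G ψ r := by
  have hc : Nat.card (solSetR G (cmb φ ψ) r)
      = Nat.card (solSetR G φ r) * Nat.card (solSetR G ψ r) := by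
    rw [Nat.card_congr (cmbEquiv G φ ψ r), Nat.card_prod]
  rw [stoneGR, stoneGR, stoneGR, hc]
  push_cast
  rw [pow_add]
  ring

end RootingAux

namespace RootingAux

/-! #### Counting formulas -/

/-- `ξ(y) ∧ Ψ(x̄,y)` as a single formula. -/
def withRoot {P : ℕ} (ξ : Language.graph.Formula (Fin 1))
    (Ψ : Language.graph.Formula (Fin (P + 1))) : Language.graph.Formula (Fin (P + 1)) :=
  (ξ.relabel (fun _ => Fin.last P)) ⊓ Ψ

/-- matrix of the counting formula -/
noncomputable def cntM {P : ℕ} (ξ : Language.graph.Formula (Fin 1))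
    (Ψ : Language.graph.Formula (Fin (P + 1))) (k : ℕ) :
    Language.graph.BoundedFormula (Fin P) k :=
  (BoundedFormula.iInf fun ij : Fin k × Fin k =>
     if ij.1 = ij.2 then ⊤
     else ((Term.var (Sum.inr ij.1)).bdEqual (Term.var (Sum.inr ij.2))).not)
  ⊓ (BoundedFormula.iInf fun i : Fin k =>
       BoundedFormula.relabel (Fin.snoc (fun j => Sum.inl j) (Sum.inr i)) (withRoot ξ Ψ))

/-- the counting formula: "there are at least `k` distinct `y` with `ξ(y) ∧ Ψ(x̄,y)`" -/
noncomputable def cnt {P : ℕ} (ξ : Language.graph.Formula (Fin 1))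
    (Ψ : Language.graph.Formula (Fin (P + 1))) (k : ℕ) : Language.graph.Formula (Fin P) :=
  (cntM ξ Ψ k).exs

variable {V : Type} (G : SimpleGraph V)

lemma realize_withRoot {P : ℕ} (ξ : Language.graph.Formula (Fin 1))
    (Ψ : Language.graph.Formula (Fin (P + 1))) (v : Fin P → V) (r : V) :
    letI := G.structure
    ((withRoot ξ Ψ).Realize (Fin.snoc v r) ↔ r ∈ sol1 G ξ ∧ Ψ.Realize (Fin.snoc v r)) := by
  letI := G.structure
  rw [withRoot, Formula.realize_inf, Formula.realize_relabel]
  have : (Fin.snoc v r : Fin (P+1) → V) ∘ (fun _ : Fin 1 => Fin.last P) = fun _ => r := by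
    funext j; simp
  rw [this]
  rfl

lemma realize_cnt {P : ℕ} (ξ : Language.graph.Formula (Fin 1))
    (Ψ : Language.graph.Formula (Fin (P + 1))) (k : ℕ) (v : Fin P → V) :
    letI := G.structure
    ((cnt ξ Ψ k).Realize v ↔ ∃ xs : Fin k → V, Function.Injective xs ∧
      ∀ i, xs i ∈ sol1 G ξ ∧ Ψ.Realize (Fin.snoc v (xs i))) := by
  letI := G.structure
  rw [cnt, BoundedFormula.realize_exs]
  refine exists_congr fun xs => ?_
  rw [cntM, BoundedFormula.realize_inf, BoundedFormula.realize_iInf,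
    BoundedFormula.realize_iInf]
  constructor
  · rintro ⟨hinj, hsat⟩
    refine ⟨fun i j hij => ?_, fun i => ?_⟩
    · by_contra hne
      have := hinj (i, j)
      rw [if_neg hne] at this
      simp only [BoundedFormula.realize_not, BoundedFormula.realize_bdEqual,
        Term.realize_var, Sum.elim_inr] at this
      exact this hij
    · have := hsat i
      rw [BoundedFormula.realize_relabel] at this
      have harg : (Sum.elim v (xs ∘ Fin.castAdd 0) ∘ Fin.snoc (fun j => Sum.inl j) (Sum.inr i))
          = Fin.snoc v (xs i) := by
        funext j
        refine Fin.lastCases ?_ (fun j => ?_) j <;> simp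
      rw [harg] at this
      have := (realize_withRoot G ξ Ψ v (xs i)).1 ?_
      · exact this
      · have h0 : (xs ∘ Fin.natAdd k : Fin 0 → V) = default := Subsingleton.elim _ _
        rw [h0] at this
        exact this
  · rintro ⟨hinj, hsat⟩
    constructor
    · rintro ⟨i, j⟩
      by_cases hij : i = j
      · rw [if_pos hij]; exact BoundedFormula.realize_top.2 trivial
      · rw [if_neg hij]
        simp only [BoundedFormula.realize_not, BoundedFormula.realize_bdEqual,
          Term.realize_var, Sum.elim_inr]
        intro h
        exact hij (hinj (by simpa using h))
    · intro i
      rw [BoundedFormula.realize_relabel]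
      have harg : (Sum.elim v (xs ∘ Fin.castAdd 0) ∘ Fin.snoc (fun j => Sum.inl j) (Sum.inr i))
          = Fin.snoc v (xs i) := by
        funext j
        refine Fin.lastCases ?_ (fun j => ?_) j <;> simp
      rw [harg]
      have h0 : (xs ∘ Fin.natAdd k : Fin 0 → V) = default := Subsingleton.elim _ _
      rw [h0]
      exact (realize_withRoot G ξ Ψ v (xs i)).2 (hsat i)

lemma exists_inj_iff_le_card {X : Type} [Fintype X] (S : Set X) (k : ℕ) :
    (∃ xs : Fin k → X, Function.Injective xs ∧ ∀ i, xs i ∈ S) ↔ k ≤ Nat.card S := by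
  classical
  haveI : Fintype ↥S := Fintype.ofFinite ↥S
  rw [Nat.card_eq_fintype_card]
  constructor
  · rintro ⟨xs, hinj, hmem⟩
    have : Nonempty (Fin k ↪ ↥S) :=
      ⟨⟨fun i => ⟨xs i, hmem i⟩, fun i j h => hinj (congrArg Subtype.val h)⟩⟩
    simpa using Function.Embedding.nonempty_iff_card_le.1 this
  · intro hk
    obtain ⟨e⟩ := Function.Embedding.nonempty_iff_card_le.2 (by simpa using hk :
      Fintype.card (Fin k) ≤ Fintype.card ↥S)
    exact ⟨fun i => (e i).1, fun i j h => e.injective (Subtype.ext h), fun i => (e i).2⟩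

/-! #### The double-counting identity -/

lemma sum_card_eq {V : Type} [Fintype V] (G : SimpleGraph V)
    (ξ : Language.graph.Formula (Fin 1)) {P : ℕ}
    (Ψ : Language.graph.Formula (Fin (P + 1))) {B : ℕ}
    (hB : Nat.card (sol1 G ξ) ≤ B) :
    ∑ r ∈ (Set.toFinite (sol1 G ξ)).toFinset, Nat.card (solSetR G Ψ r)
      = ∑ k ∈ Finset.Icc 1 B, Nat.card (solSet G (cnt ξ Ψ k)) := by
  classical
  set A := (Set.toFinite (sol1 G ξ)).toFinset with hA
  have hAmem : ∀ r, r ∈ A ↔ r ∈ sol1 G ξ := fun r => Set.Finite.mem_toFinset _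
  have hAcard : A.card ≤ B := by
    rw [hA, ← Nat.card_eq_card_finite_toFinset]; exact hB
  letI := G.structure
  have key : ∀ (s : Set (Fin P → V)), Nat.card s
      = ∑ x : Fin P → V, if x ∈ s then 1 else 0 := by
    intro s
    rw [Nat.card_eq_fintype_card, Fintype.card_subtype, Finset.card_filter]
  have lhs : ∑ r ∈ A, Nat.card (solSetR G Ψ r)
      = ∑ v : Fin P → V, (A.filter (fun r => v ∈ solSetR G Ψ r)).card := by
    calc ∑ r ∈ A, Nat.card (solSetR G Ψ r)
        = ∑ r ∈ A, ∑ v : Fin P → V, if v ∈ solSetR G Ψ r then 1 else 0 :=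
          Finset.sum_congr rfl fun r _ => key _
      _ = ∑ v : Fin P → V, ∑ r ∈ A, if v ∈ solSetR G Ψ r then 1 else 0 :=
          Finset.sum_comm
      _ = ∑ v : Fin P → V, (A.filter (fun r => v ∈ solSetR G Ψ r)).card := by
          refine Finset.sum_congr rfl fun v _ => ?_
          rw [Finset.card_filter]
  have rhs : ∑ k ∈ Finset.Icc 1 B, Nat.card (solSet G (cnt ξ Ψ k))
      = ∑ v : Fin P → V,
          ((Finset.Icc 1 B).filter (fun k => v ∈ solSet G (cnt ξ Ψ k))).card := by
    calc ∑ k ∈ Finset.Icc 1 B, Nat.card (solSet G (cnt ξ Ψ k))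
        = ∑ k ∈ Finset.Icc 1 B, ∑ v : Fin P → V, if v ∈ solSet G (cnt ξ Ψ k) then 1 else 0 :=
          Finset.sum_congr rfl fun k _ => key _
      _ = ∑ v : Fin P → V, ∑ k ∈ Finset.Icc 1 B, if v ∈ solSet G (cnt ξ Ψ k) then 1 else 0 :=
          Finset.sum_comm
      _ = _ := by
          refine Finset.sum_congr rfl fun v _ => ?_
          rw [Finset.card_filter]
  rw [lhs, rhs]
  refine Finset.sum_congr rfl fun v _ => ?_
  set Nv := (A.filter (fun r => v ∈ solSetR G Ψ r)).card with hNv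
  have hNvB : Nv ≤ B := le_trans (Finset.card_filter_le _ _) hAcard
  have hsolv : ∀ k, v ∈ solSet G (cnt ξ Ψ k) ↔ k ≤ Nv := by
    intro k
    have h1 : v ∈ solSet G (cnt ξ Ψ k) ↔ ∃ xs : Fin k → V, Function.Injective xs ∧
        ∀ i, xs i ∈ {r | r ∈ sol1 G ξ ∧ Ψ.Realize (Fin.snoc v r)} := realize_cnt G ξ Ψ k v
    rw [h1, exists_inj_iff_le_card]
    have h2 : Nat.card {r | r ∈ sol1 G ξ ∧ Ψ.Realize (Fin.snoc v r)} = Nv := by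
      rw [hNv]
      have hkey : ∀ (s : Set V), Nat.card s = (Finset.univ.filter (· ∈ s)).card := by
        intro s
        rw [Nat.card_eq_fintype_card]
        exact Fintype.card_subtype _
      rw [hkey]
      congr 1
      ext r
      simp only [Finset.mem_filter, Finset.mem_univ, true_and, hAmem]
      rfl
    rw [h2]
  have : (Finset.Icc 1 B).filter (fun k => v ∈ solSet G (cnt ξ Ψ k)) = Finset.Icc 1 Nv := by
    ext k
    simp only [Finset.mem_filter, Finset.mem_Icc, hsolv]
    omega
  rw [this, Nat.card_Icc]
  omega

lemma sum_stoneGR_eq {V : Type} (fV : Fintype V) (G : SimpleGraph V)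
    (ξ : Language.graph.Formula (Fin 1)) {P : ℕ}
    (Ψ : Language.graph.Formula (Fin (P + 1))) {B : ℕ}
    (hB : Nat.card (sol1 G ξ) ≤ B) :
    ∑ r ∈ (Set.toFinite (sol1 G ξ)).toFinset, stoneGR fV G Ψ r
      = ∑ k ∈ Finset.Icc 1 B, stoneG fV G (cnt ξ Ψ k) := by
  unfold stoneGR stoneG
  rw [← Finset.sum_div, ← Finset.sum_div]
  congr 1
  rw [← Nat.cast_sum, ← Nat.cast_sum, sum_card_eq G ξ Ψ hB]

/-! #### Countability and the parameter space -/

instance graphFormulaCountable (α : Type) [Countable α] :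
    Countable (Language.graph.Formula α) := by
  haveI : Countable (Σ n, Language.graph.BoundedFormula α n) :=
    (BoundedFormula.listEncode_sigma_injective).countable
  exact (sigma_mk_injective (i := 0) :
    Function.Injective fun φ : Language.graph.Formula α =>
      (⟨0, φ⟩ : Σ n, Language.graph.BoundedFormula α n)).countable

/-- The index type of all rooted formulas. -/
abbrev Phi : Type := Σ p : ℕ, Language.graph.Formula (Fin (p + 1))

/-- The compact parameter space `[0,1]^Φ`. -/
abbrev KK : Type := Phi → Set.Icc (0:ℝ) 1

/-- Coordinate evaluation, as a continuous map on `KK`. -/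
noncomputable def ev (φ : Phi) : C(KK, ℝ) :=
  ⟨fun t => (t φ : ℝ), (continuous_apply φ).subtype_val⟩

lemma ev_separates : (Algebra.adjoin ℝ (Set.range ev)).topologicalClosure = ⊤ := by
  apply ContinuousMap.subalgebra_topologicalClosure_eq_top_of_separatesPoints
  intro x y hxy
  have : ∃ φ, x φ ≠ y φ := by
    by_contra h
    push_neg at h
    exact hxy (funext h)
  obtain ⟨φ, hφ⟩ := this
  exact ⟨ev φ, ⟨ev φ, Algebra.subset_adjoin ⟨φ, rfl⟩, rfl⟩, by
    simpa [ev, Subtype.ext_iff] using fun h => hφ (Subtype.ext h)⟩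

end RootingAux

open RootingAux

theorem rooting_without_modeling_limit
    (V : ℕ → Type) (fV : ∀ n, Fintype (V n)) (hVne : ∀ n, Nonempty (V n))
    (G : ∀ n, SimpleGraph (V n))
    (hFOconv : ∀ (p : ℕ) (φ : Language.graph.Formula (Fin p)),
      ∃ c : ℝ, Tendsto (fun n => stoneG (fV n) (G n) φ) atTop (nhds c))
    (ξ : Language.graph.Formula (Fin 1))
    (hne : ∀ n, (sol1 (G n) ξ).Nonempty)
    (hbdd : ∃ B : ℕ, ∀ n, Nat.card (sol1 (G n) ξ) ≤ B) :
    ∃ rs : (n : ℕ) → V n, (∀ n, rs n ∈ sol1 (G n) ξ) ∧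
      ∀ (p : ℕ) (φ : Language.graph.Formula (Fin (p + 1))),
        ∃ c : ℝ, Tendsto (fun n => stoneGR (fV n) (G n) φ (rs n)) atTop (nhds c) := by
  classical
  obtain ⟨B, hB⟩ := hbdd
  haveI : ∀ n, Fintype (V n) := fV
  -- the finite sets of admissible roots
  set S : (n : ℕ) → Finset (V n) := fun n => (Set.toFinite (sol1 (G n) ξ)).toFinset with hSdef
  have hSmem : ∀ n (r : V n), r ∈ S n ↔ r ∈ sol1 (G n) ξ :=
    fun n r => Set.Finite.mem_toFinset _
  have hSne : ∀ n, (S n).Nonempty :=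
    fun n => ⟨(hne n).choose, (hSmem _ _).2 (hne n).choose_spec⟩
  have hScard : ∀ n, (S n).card ≤ B := fun n => by
    rw [← Nat.card_eq_card_finite_toFinset]; exact hB n
  -- convergence of root-sums of rooted Stone pairings (the "moments")
  have moments : ∀ (P : ℕ) (Ψ : Language.graph.Formula (Fin (P + 1))),
      ∃ c, Tendsto (fun n => ∑ r ∈ S n, stoneGR (fV n) (G n) Ψ r) atTop (nhds c) := by
    intro P Ψ
    choose c hc using fun k : ℕ => hFOconv P (cnt ξ Ψ k)
    refine ⟨∑ k ∈ Finset.Icc 1 B, c k, ?_⟩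
    have heq : (fun n => ∑ r ∈ S n, stoneGR (fV n) (G n) Ψ r)
        = fun n => ∑ k ∈ Finset.Icc 1 B, stoneG (fV n) (G n) (cnt ξ Ψ k) :=
      funext fun n => sum_stoneGR_eq (fV n) (G n) ξ Ψ (hB n)
    rw [heq]
    exact tendsto_finset_sum _ fun k _ => hc k
  -- the map recording all rooted Stone pairings of a root
  have h01 : ∀ n (r : V n) (φ : Phi), stoneGR (fV n) (G n) φ.2 r ∈ Set.Icc (0:ℝ) 1 :=
    fun n r φ => ⟨stoneGR_nonneg (fV n) (G n) φ.2 r,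
      by haveI := hVne n; exact stoneGR_le_one (fV n) (G n) φ.2 r⟩
  set T : (n : ℕ) → V n → KK := fun n r φ => ⟨stoneGR (fV n) (G n) φ.2 r, h01 n r φ⟩ with hTdef
  -- convergence of root-sums for all members of the polynomial algebra
  have convA : ∀ g ∈ Algebra.adjoin ℝ (Set.range ev),
      ∃ c, Tendsto (fun n => ∑ r ∈ S n, g (T n r)) atTop (nhds c) := by
    have convMono : ∀ u ∈ Submonoid.closure (Set.range ev),
        ∃ (P : ℕ) (Ψ : Language.graph.Formula (Fin (P + 1))), ∀ n (r : V n),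
          u (T n r) = stoneGR (fV n) (G n) Ψ r := by
      intro u hu
      induction hu using Submonoid.closure_induction with
      | mem x hx =>
        obtain ⟨φ, rfl⟩ := hx
        exact ⟨φ.1, φ.2, fun n r => rfl⟩
      | one =>
        refine ⟨0, ⊤, fun n r => ?_⟩
        rw [stoneGR_top]
        rfl
      | mul x y hx hy ihx ihy =>
        obtain ⟨P₁, Ψ₁, h₁⟩ := ihx
        obtain ⟨P₂, Ψ₂, h₂⟩ := ihy
        refine ⟨P₁ + P₂, cmb Ψ₁ Ψ₂, fun n r => ?_⟩
        rw [ContinuousMap.mul_apply, h₁, h₂, stoneGR_cmb]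
    intro g hg
    have hg' : g ∈ Submodule.span ℝ ((Submonoid.closure (Set.range ev) : Submonoid C(KK, ℝ))
        : Set C(KK, ℝ)) := by
      rw [← Algebra.adjoin_eq_span]
      exact hg
    clear hg
    induction hg' using Submodule.span_induction with
    | mem u hu =>
      obtain ⟨P, Ψ, hPΨ⟩ := convMono u hu
      obtain ⟨c, hc⟩ := moments P Ψ
      refine ⟨c, ?_⟩
      have heq : (fun n => ∑ r ∈ S n, u (T n r))
          = fun n => ∑ r ∈ S n, stoneGR (fV n) (G n) Ψ r :=
        funext fun n => Finset.sum_congr rfl fun r _ => hPΨ n r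
      rw [heq]; exact hc
    | zero =>
      exact ⟨0, by simpa using tendsto_const_nhds⟩
    | add x y hx hy ihx ihy =>
      obtain ⟨c, hc⟩ := ihx
      obtain ⟨d, hd⟩ := ihy
      refine ⟨c + d, ?_⟩
      have heq : (fun n => ∑ r ∈ S n, (x + y) (T n r))
          = fun n => (∑ r ∈ S n, x (T n r)) + ∑ r ∈ S n, y (T n r) := by
        funext n
        rw [← Finset.sum_add_distrib]
        rfl
      rw [heq]
      exact hc.add hd
    | smul a x hx ihx =>
      obtain ⟨c, hc⟩ := ihx
      refine ⟨a * c, ?_⟩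
      have heq : (fun n => ∑ r ∈ S n, (a • x) (T n r))
          = fun n => a * ∑ r ∈ S n, x (T n r) := by
        funext n
        rw [Finset.mul_sum]
        rfl
      rw [heq]
      exact hc.const_mul a
  -- now find a "good" point of KK
  letI : MetricSpace KK := TopologicalSpace.metrizableSpaceMetric KK
  have good : ∃ t : KK, ∀ ε > (0:ℝ), ∀ᶠ n in atTop, ∃ r ∈ S n, dist (T n r) t < ε := by
    by_contra hbad
    push_neg at hbad
    have hbad' : ∀ t : KK, ∃ ε > (0:ℝ), ∃ᶠ n in atTop, ∀ r ∈ S n, ε ≤ dist (T n r) t := by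
      intro t
      obtain ⟨ε, hε, hfr⟩ := hbad t
      refine ⟨ε, hε, ?_⟩
      exact hfr
    choose εt hεt hfreq using hbad'
    -- bump functions
    have fcont : ∀ t : KK, Continuous fun x => max 0 (1 - dist x t / (εt t / 2)) := by
      intro t
      exact continuous_const.max (continuous_const.sub ((continuous_id.dist
        continuous_const).div_const _))
    set f : KK → C(KK, ℝ) := fun t => ⟨fun x => max 0 (1 - dist x t / (εt t / 2)), fcont t⟩
      with hfdef
    have fnn : ∀ t x, 0 ≤ f t x := fun t x => le_max_left _ _
    have fle : ∀ t x, f t x ≤ 1 := by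
      intro t x
      refine max_le (by norm_num) ?_
      have : 0 ≤ dist x t / (εt t / 2) := div_nonneg dist_nonneg (by linarith [hεt t])
      linarith
    have fzero : ∀ t x, εt t ≤ dist x t → f t x = 0 := by
      intro t x hd
      have h2 : (1:ℝ) ≤ dist x t / (εt t / 2) := by
        rw [le_div_iff₀ (by linarith [hεt t])]
        linarith [hεt t]
      have : (1:ℝ) - dist x t / (εt t / 2) ≤ 0 := by linarith
      simpa [hfdef] using max_eq_left this
    have fbig : ∀ t x, dist x t < εt t / 4 → (1:ℝ)/2 ≤ f t x := by
      intro t x hd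
      have hε := hεt t
      have h2 : dist x t / (εt t / 2) ≤ 1/2 := by
        rw [div_le_iff₀ (by linarith)]
        linarith
      have : (1:ℝ)/2 ≤ 1 - dist x t / (εt t / 2) := by linarith
      exact le_trans this (le_max_right _ _)
    -- finite subcover
    obtain ⟨Tf, hTf⟩ := isCompact_univ.elim_finite_subcover
      (fun t : KK => Metric.ball t (εt t / 4)) (fun t => Metric.isOpen_ball)
      (fun x _ => Set.mem_iUnion.2 ⟨x, Metric.mem_ball_self (by linarith [hεt x])⟩)
    set M : ℕ := Tf.card with hM
    set δ : ℝ := 1 / (4 * ((M:ℝ) + 1) * ((B:ℝ) + 1)) with hδ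
    have hM1 : (0:ℝ) < (M:ℝ) + 1 := Nat.cast_add_one_pos M
    have hB1 : (0:ℝ) < (B:ℝ) + 1 := Nat.cast_add_one_pos B
    have hden : (0:ℝ) < 4 * ((M:ℝ) + 1) * ((B:ℝ) + 1) := by nlinarith
    have hδpos : 0 < δ := by rw [hδ]; exact one_div_pos.2 hden
    -- approximate the bumps inside the algebra
    have happrox : ∀ t : KK, ∃ g ∈ Algebra.adjoin ℝ (Set.range ev), dist (f t) g < δ := by
      intro t
      have hft : f t ∈ (Algebra.adjoin ℝ (Set.range ev)).topologicalClosure := by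
        rw [ev_separates]; exact Algebra.mem_top
      have hcl : f t ∈ closure ((Algebra.adjoin ℝ (Set.range ev) : Subalgebra ℝ C(KK, ℝ))
          : Set C(KK, ℝ)) := hft
      exact (Metric.mem_closure_iff (α := C(KK, ℝ))).1 hcl δ hδpos
    choose g hgA hgd using happrox
    choose c hc using fun t : KK => convA (g t) (hgA t)
    -- pointwise comparisons
    have hgf : ∀ (t : KK) (x : KK), |g t x - f t x| ≤ dist (f t) (g t) := by
      intro t x
      have h := ContinuousMap.dist_apply_le_dist (f := f t) (g := g t) x
      rw [Real.dist_eq] at h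
      rw [abs_sub_comm]
      exact h
    -- (i) each c t is at most B * δ
    have hcle : ∀ t : KK, c t ≤ B * δ := by
      intro t
      by_contra hgt
      push_neg at hgt
      have hev : ∀ᶠ n in atTop, B * δ < ∑ r ∈ S n, g t (T n r) :=
        (hc t).eventually (eventually_gt_nhds hgt)
      have hfr : ∃ᶠ n in atTop, ∑ r ∈ S n, g t (T n r) ≤ B * δ := by
        refine (hfreq t).mono fun n hn => ?_
        have hsum : ∑ r ∈ S n, g t (T n r) ≤ ∑ r ∈ S n, δ := by
          refine Finset.sum_le_sum fun r hr => ?_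
          have h1 : f t (T n r) = 0 := fzero t _ (hn r hr)
          have h2 : g t (T n r) - f t (T n r) ≤ dist (f t) (g t) :=
            le_trans (le_abs_self _) (hgf t _)
          have h3 := hgd t
          rw [h1] at h2
          linarith
        rw [Finset.sum_const, nsmul_eq_mul] at hsum
        have : ((S n).card : ℝ) * δ ≤ (B : ℝ) * δ := by
          have := hScard n
          have : ((S n).card : ℝ) ≤ (B : ℝ) := by exact_mod_cast this
          nlinarith [hδpos.le]
        linarith
      obtain ⟨n, hn1, hn2⟩ := (hfr.and_eventually hev).exists
      linarith
    -- (ii) the sum of the c t over the cover is at least 1/2 - M*δ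
    have hMδ : (M:ℝ) * δ ≤ 1/4 := by
      rw [hδ, mul_one_div, div_le_div_iff₀ hden (by norm_num : (0:ℝ) < 4)]
      have hBnn : (0:ℝ) ≤ (B:ℝ) := Nat.cast_nonneg B
      have hMnn : (0:ℝ) ≤ (M:ℝ) := Nat.cast_nonneg M
      nlinarith
    have hlower : ∀ n, (1:ℝ)/2 - M * δ ≤ ∑ t ∈ Tf, ∑ r ∈ S n, g t (T n r) := by
      intro n
      rw [Finset.sum_comm]
      obtain ⟨r₀, hr₀⟩ := hSne n
      have hterm : ∀ (r : V n), r ∈ S n → (1:ℝ)/2 - M * δ ≤ ∑ t ∈ Tf, g t (T n r) := by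
        intro r _
        obtain ⟨t₀, ht₀Tf, ht₀⟩ := Set.mem_iUnion₂.1 (hTf (Set.mem_univ (T n r)))
        have hball : dist (T n r) t₀ < εt t₀ / 4 := Metric.mem_ball.1 ht₀
        have h1 : (1:ℝ)/2 ≤ f t₀ (T n r) := fbig t₀ _ hball
        have hsumδ : g t₀ (T n r) + δ ≤ ∑ t ∈ Tf, (g t (T n r) + δ) := by
          refine Finset.single_le_sum (f := fun t => g t (T n r) + δ) (fun t _ => ?_) ht₀Tf
          have h2 : f t (T n r) - g t (T n r) ≤ dist (f t) (g t) :=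
            le_trans (le_abs_self _) (by rw [abs_sub_comm]; exact hgf t _)
          have h3 := hgd t
          have h4 := fnn t (T n r)
          show (0:ℝ) ≤ g t (T n r) + δ
          linarith
        have h5 : f t₀ (T n r) - g t₀ (T n r) ≤ dist (f t₀) (g t₀) :=
          le_trans (le_abs_self _) (by rw [abs_sub_comm]; exact hgf t₀ _)
        have h6 := hgd t₀
        rw [Finset.sum_add_distrib, Finset.sum_const, nsmul_eq_mul] at hsumδ
        have : (1:ℝ)/2 - δ ≤ g t₀ (T n r) := by linarith
        have hfinal : g t₀ (T n r) + δ ≤ ∑ t ∈ Tf, g t (T n r) + M * δ := by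
          simpa [hM] using hsumδ
        linarith
      have hnn : ∀ r ∈ S n, (0:ℝ) ≤ ∑ t ∈ Tf, g t (T n r) := fun r hr =>
        le_trans (by linarith) (hterm r hr)
      have hone := Finset.single_le_sum hnn hr₀
      linarith [hterm r₀ hr₀]
    have hTsum : Tendsto (fun n => ∑ t ∈ Tf, ∑ r ∈ S n, g t (T n r)) atTop
        (nhds (∑ t ∈ Tf, c t)) := tendsto_finset_sum _ fun t _ => hc t
    have hge : (1:ℝ)/2 - M * δ ≤ ∑ t ∈ Tf, c t :=
      ge_of_tendsto hTsum (Filter.Eventually.of_forall hlower)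
    have hub : ∑ t ∈ Tf, c t ≤ M * (B * δ) := by
      calc ∑ t ∈ Tf, c t ≤ ∑ t ∈ Tf, B * δ := Finset.sum_le_sum fun t _ => hcle t
        _ = M * (B * δ) := by rw [Finset.sum_const, nsmul_eq_mul, hM]
    have hMBδ : (M:ℝ) * (B * δ) + M * δ ≤ 1/4 := by
      have hrw : (M:ℝ) * (B * δ) + M * δ = (M * ((B:ℝ) + 1)) * δ := by ring
      rw [hrw, hδ, mul_one_div, div_le_div_iff₀ hden (by norm_num : (0:ℝ) < 4)]
      have hBnn : (0:ℝ) ≤ (B:ℝ) := Nat.cast_nonneg B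
      have hMnn : (0:ℝ) ≤ (M:ℝ) := Nat.cast_nonneg M
      nlinarith
    linarith
  -- select roots converging to the good point
  obtain ⟨tstar, hgood⟩ := good
  have hmin : ∀ n, ∃ r ∈ S n, ∀ r' ∈ S n,
      dist (T n r) tstar ≤ dist (T n r') tstar :=
    fun n => (S n).exists_min_image (fun r => dist (T n r) tstar) (hSne n)
  choose rs hrsmem hrsmin using hmin
  refine ⟨rs, fun n => (hSmem n (rs n)).1 (hrsmem n), ?_⟩
  have hTt : Tendsto (fun n => T n (rs n)) atTop (nhds tstar) := by
    refine Metric.tendsto_atTop.2 fun ε hε => ?_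
    obtain ⟨N, hN⟩ := Filter.eventually_atTop.1 (hgood ε hε)
    refine ⟨N, fun n hn => ?_⟩
    obtain ⟨r, hr, hrd⟩ := hN n hn
    exact lt_of_le_of_lt (hrsmin n r hr) hrd
  intro p φ
  refine ⟨(tstar ⟨p, φ⟩ : ℝ), ?_⟩
  have hcont : Continuous fun t : KK => (t ⟨p, φ⟩ : ℝ) := (continuous_apply _).subtype_val
  have hcomp := (hcont.tendsto tstar).comp hTt
  have heq : (fun n => stoneGR (fV n) (G n) φ (rs n))
      = fun n => ((T n (rs n)) ⟨p, φ⟩ : ℝ) := by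
    funext n
    rw [hTdef]
  rw [heq]
  exact hcomp
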